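/- arXiv:1509.08866 — 4 statements merged into one kernel-verified Lean document; each statement's English description precedes it below -/
import Mathlib

section
/- Let f : ℝ>0 → (0,∞) be a nowhere-zero multiplicatively convex function. Then f has bounded exponent (i.e. there is R > 0 with |log f(t₁) − log f(t₀)| ≤ R·|log t₁ − log t₀| for all distinct t₀,t₁ > 0) if and only if both limits deg⁺(f) = lim_{t₀,t₁→+∞} (log f(t₀) − log f(t₁))/(log t₀ − log t₁) and deg⁻(f) = lim_{t₀,t₁→0⁺} (log f(t₀) − log f(t₁))/(log t₀ − log t₁) exist in ℝ; in that case deg⁺(f) = inf{D ∈ ℝ : f(t)·t^{−D} → 0 as t→+∞} and deg⁻(f) = sup{D ∈ ℝ : f(t)·t^{−D} → 0 as t→0⁺}. -/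
open Real Set Filter

def MulConvex (f : ℝ → ℝ) : Prop :=
  ∀ t₀ t₁ l : ℝ, 0 < t₀ → 0 < t₁ → 0 < l → l < 1 →
    f (t₀ ^ l * t₁ ^ (1 - l)) ≤ f t₀ ^ l * f t₁ ^ (1 - l)

/-- Slope of the chord of the log-log plot of `f` through parameters `a` and `b`. -/
noncomputable def logSlope (f : ℝ → ℝ) (a b : ℝ) : ℝ :=
  (Real.log (f a) - Real.log (f b)) / (Real.log a - Real.log b)

/-- Pairs of distinct parameters both tending to `+∞`. -/
def pairTop : Filter (ℝ × ℝ) := (atTop ×ˢ atTop) ⊓ 𝓟 {p : ℝ × ℝ | p.1 ≠ p.2}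

/-- Pairs of distinct positive parameters both tending to `0⁺`. -/
def pairBot : Filter (ℝ × ℝ) :=
  ((nhdsWithin 0 (Ioi 0)) ×ˢ (nhdsWithin 0 (Ioi 0))) ⊓ 𝓟 {p : ℝ × ℝ | p.1 ≠ p.2}


noncomputable def G (f : ℝ → ℝ) : ℝ → ℝ := fun x => Real.log (f (Real.exp x))

lemma convexG (f : ℝ → ℝ) (hfpos : ∀ t, 0 < t → 0 < f t)
    (hconv : ∀ t₀ t₁ l : ℝ, 0 < t₀ → 0 < t₁ → 0 < l → l < 1 →
      f (t₀ ^ l * t₁ ^ (1 - l)) ≤ f t₀ ^ l * f t₁ ^ (1 - l)) :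
    ConvexOn ℝ univ (G f) := by
  refine ⟨convex_univ, fun x _ y _ a b ha hb hab => ?_⟩
  rcases eq_or_lt_of_le ha with ha0 | ha
  · simp [← ha0, show b = 1 by linarith]
  rcases eq_or_lt_of_le hb with hb0 | hb
  · simp [← hb0, show a = 1 by linarith]
  have ha1 : a < 1 := by linarith
  have hb1 : b = 1 - a := by linarith
  subst hb1
  have hx := Real.exp_pos x
  have hy := Real.exp_pos y
  have key := hconv (Real.exp x) (Real.exp y) a hx hy ha ha1
  have h1 : Real.exp x ^ a * Real.exp y ^ (1 - a) = Real.exp (a * x + (1 - a) * y) := by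
    rw [← Real.exp_mul, ← Real.exp_mul, ← Real.exp_add]
    ring_nf
  rw [h1] at key
  have hfx := hfpos _ hx
  have hfy := hfpos _ hy
  have hlog := Real.log_le_log (hfpos _ (Real.exp_pos _)) key
  calc G f (a • x + (1 - a) • y) = Real.log (f (Real.exp (a * x + (1-a) * y))) := by
        simp [G, smul_eq_mul]
    _ ≤ Real.log (f (Real.exp x) ^ a * f (Real.exp y) ^ (1 - a)) := hlog
    _ = a * G f x + (1 - a) * G f y := by
        rw [Real.log_mul (by positivity) (by positivity), Real.log_rpow hfx,
          Real.log_rpow hfy]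
        simp [G]

section Slopes
variable {g : ℝ → ℝ}

lemma slope_field (x y : ℝ) : slope g x y = (g y - g x) / (y - x) := slope_def_field g x y

lemma slope_adj (hg : ConvexOn ℝ univ g) {x y z : ℝ} (hxy : x < y) (hyz : y < z) :
    slope g x y ≤ slope g y z := by
  rw [slope_field, slope_field]
  exact hg.slope_mono_adjacent (mem_univ x) (mem_univ z) hxy hyz

lemma slope_chain (hg : ConvexOn ℝ univ g) {x y u v : ℝ} (hxy : x < y) (hyu : y ≤ u)
    (huv : u < v) : slope g x y ≤ slope g u v := by
  rcases eq_or_lt_of_le hyu with rfl | h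
  · exact slope_adj hg hxy huv
  · exact le_trans (slope_adj hg hxy h) (slope_adj hg h huv)

end Slopes

lemma logSlope_eq_slope (f : ℝ → ℝ) {a b : ℝ} (ha : 0 < a) (hb : 0 < b) :
    logSlope f a b = slope (G f) (Real.log a) (Real.log b) := by
  rw [slope_field, logSlope, G, G, Real.exp_log ha, Real.exp_log hb]
  rw [← neg_sub (Real.log (f b)), ← neg_sub (Real.log b), neg_div_neg_eq]

lemma exists_pair_top {f : ℝ → ℝ} {d : ℝ}
    (h : Tendsto (fun p : ℝ × ℝ => logSlope f p.1 p.2) pairTop (nhds d))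
    {ε : ℝ} (hε : 0 < ε) (c : ℝ) :
    ∃ x y : ℝ, c < x ∧ x < y ∧ |slope (G f) x y - d| < ε := by
  have h2 := Metric.tendsto_nhds.1 h ε hε
  rw [pairTop, eventually_inf_principal] at h2
  rw [eventually_prod_iff] at h2
  obtain ⟨pa, hpa, pb, hpb, H⟩ := h2
  obtain ⟨Na, hNa⟩ := eventually_atTop.1 hpa
  obtain ⟨Nb, hNb⟩ := eventually_atTop.1 hpb
  set u := max (max Na Nb) (Real.exp c + 1) with hu
  have hu1 : 0 < u := lt_of_lt_of_le (by positivity) (le_max_right _ _)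
  have hune : u ≠ u + 1 := by linarith
  have key := H (hNa u (le_trans (le_max_left _ _) (le_max_left _ _)))
    (hNb (u + 1) (by
      have : Nb ≤ u := le_trans (le_max_right _ _) (le_max_left _ _); linarith)) hune
  refine ⟨Real.log u, Real.log (u + 1), ?_, ?_, ?_⟩
  · have : Real.exp c < u := lt_of_lt_of_le (by linarith [Real.exp_pos c]) (le_max_right _ _)
    calc c = Real.log (Real.exp c) := (Real.log_exp c).symm
      _ < Real.log u := Real.log_lt_log (Real.exp_pos c) this
  · exact Real.log_lt_log hu1 (by linarith)
  · rw [← logSlope_eq_slope f hu1 (by linarith), ← Real.dist_eq]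
    exact key

lemma exists_pair_bot {f : ℝ → ℝ} {d : ℝ}
    (h : Tendsto (fun p : ℝ × ℝ => logSlope f p.1 p.2) pairBot (nhds d))
    {ε : ℝ} (hε : 0 < ε) (c : ℝ) :
    ∃ x y : ℝ, x < y ∧ y < c ∧ |slope (G f) x y - d| < ε := by
  have h2 := Metric.tendsto_nhds.1 h ε hε
  rw [pairBot, eventually_inf_principal] at h2
  rw [eventually_prod_iff] at h2
  obtain ⟨pa, hpa, pb, hpb, H⟩ := h2
  have hIoo : Ioo (0:ℝ) (Real.exp c) ∈ nhdsWithin 0 (Ioi 0) :=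
    Ioo_mem_nhdsGT_of_mem ⟨le_refl 0, Real.exp_pos c⟩
  obtain ⟨t₁, ht₁b, ht₁⟩ := Filter.nonempty_of_mem (inter_mem hpb hIoo)
  have hIoo2 : Ioo (0:ℝ) t₁ ∈ nhdsWithin 0 (Ioi 0) :=
    Ioo_mem_nhdsGT_of_mem ⟨le_refl 0, ht₁.1⟩
  obtain ⟨t₀, ht₀a, ht₀⟩ := Filter.nonempty_of_mem (inter_mem hpa hIoo2)
  have key := H ht₀a ht₁b (ne_of_lt ht₀.2)
  refine ⟨Real.log t₀, Real.log t₁, Real.log_lt_log ht₀.1 ht₀.2, ?_, ?_⟩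
  · calc Real.log t₁ < Real.log (Real.exp c) := Real.log_lt_log ht₁.1 ht₁.2
      _ = c := Real.log_exp c
  · rw [← logSlope_eq_slope f ht₀.1 ht₁.1, ← Real.dist_eq]
    exact key

lemma slope_le_dtop {f : ℝ → ℝ} {d : ℝ} (hg : ConvexOn ℝ univ (G f))
    (h : Tendsto (fun p : ℝ × ℝ => logSlope f p.1 p.2) pairTop (nhds d))
    {x y : ℝ} (hxy : x < y) : slope (G f) x y ≤ d := by
  refine le_of_forall_pos_le_add fun ε hε => ?_
  obtain ⟨u, v, hyu, huv, habs⟩ := exists_pair_top h hε y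
  have h1 : slope (G f) x y ≤ slope (G f) u v := slope_chain hg hxy hyu.le huv
  have h2 := (abs_lt.1 habs).2
  linarith

lemma dbot_le_slope {f : ℝ → ℝ} {d : ℝ} (hg : ConvexOn ℝ univ (G f))
    (h : Tendsto (fun p : ℝ × ℝ => logSlope f p.1 p.2) pairBot (nhds d))
    {x y : ℝ} (hxy : x < y) : d ≤ slope (G f) x y := by
  refine le_of_forall_pos_le_add fun ε hε => ?_
  obtain ⟨u, v, huv, hvx, habs⟩ := exists_pair_bot h hε x
  have h1 : slope (G f) u v ≤ slope (G f) x y := slope_chain hg huv hvx.le hxy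
  have h2 := (abs_lt.1 habs).1
  linarith

lemma tendsto_top_of_bdd {f : ℝ → ℝ} {R : ℝ}
    (hg : ConvexOn ℝ univ (G f))
    (hR : ∀ x y : ℝ, x ≠ y → |slope (G f) x y| ≤ R) :
    Tendsto (fun p : ℝ × ℝ => logSlope f p.1 p.2) pairTop
      (nhds (sSup {s | ∃ x y : ℝ, x < y ∧ slope (G f) x y = s})) := by
  set S := {s | ∃ x y : ℝ, x < y ∧ slope (G f) x y = s} with hS
  have hne : S.Nonempty := ⟨slope (G f) 0 1, 0, 1, zero_lt_one, rfl⟩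
  have hbdd : BddAbove S := ⟨R, fun s ⟨x, y, hxy, hs⟩ => hs ▸ (abs_le.1 (hR x y hxy.ne)).2⟩
  set d := sSup S with hd
  rw [Metric.tendsto_nhds]
  intro ε hε
  obtain ⟨s₀, hs₀S, hs₀⟩ := exists_lt_of_lt_csSup hne (sub_lt_self d hε)
  obtain ⟨a, b, hab, hsab⟩ := hs₀S
  rw [pairTop, eventually_inf_principal]
  have hev : ∀ᶠ p : ℝ × ℝ in atTop ×ˢ atTop,
      Real.exp b + 1 ≤ p.1 ∧ Real.exp b + 1 ≤ p.2 :=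
    (eventually_ge_atTop (Real.exp b + 1)).prod_mk (eventually_ge_atTop (Real.exp b + 1))
  filter_upwards [hev] with p hp hne'
  obtain ⟨h1, h2⟩ := hp
  have hp1 : 0 < p.1 := lt_of_lt_of_le (by positivity) h1
  have hp2 : 0 < p.2 := lt_of_lt_of_le (by positivity) h2
  have hb1 : b < Real.log p.1 := by
    calc b = Real.log (Real.exp b) := (Real.log_exp b).symm
      _ < Real.log p.1 := Real.log_lt_log (Real.exp_pos b) (by linarith)
  have hb2 : b < Real.log p.2 := by
    calc b = Real.log (Real.exp b) := (Real.log_exp b).symm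
      _ < Real.log p.2 := Real.log_lt_log (Real.exp_pos b) (by linarith)
  have hlogne : Real.log p.1 ≠ Real.log p.2 := fun hcon => hne' (by
    have := congrArg Real.exp hcon
    rwa [Real.exp_log hp1, Real.exp_log hp2] at this)
  have claim : ∀ u v : ℝ, b < u → u < v → |slope (G f) u v - d| < ε := by
    intro u v hbu huv
    have hle : slope (G f) u v ≤ d := le_csSup hbdd ⟨u, v, huv, rfl⟩
    have hge : s₀ ≤ slope (G f) u v := hsab ▸ slope_chain hg hab hbu.le huv
    rw [abs_lt]; constructor <;> linarith
  rw [Real.dist_eq, logSlope_eq_slope f hp1 hp2]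
  rcases lt_or_gt_of_ne hlogne with hlt | hgt
  · exact claim _ _ hb1 hlt
  · rw [slope_comm]; exact claim _ _ hb2 hgt

lemma tendsto_bot_of_bdd {f : ℝ → ℝ} {R : ℝ}
    (hg : ConvexOn ℝ univ (G f))
    (hR : ∀ x y : ℝ, x ≠ y → |slope (G f) x y| ≤ R) :
    Tendsto (fun p : ℝ × ℝ => logSlope f p.1 p.2) pairBot
      (nhds (sInf {s | ∃ x y : ℝ, x < y ∧ slope (G f) x y = s})) := by
  set S := {s | ∃ x y : ℝ, x < y ∧ slope (G f) x y = s} with hS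
  have hne : S.Nonempty := ⟨slope (G f) 0 1, 0, 1, zero_lt_one, rfl⟩
  have hbdd : BddBelow S := ⟨-R, fun s ⟨x, y, hxy, hs⟩ => hs ▸ (abs_le.1 (hR x y hxy.ne)).1⟩
  set d := sInf S with hd
  rw [Metric.tendsto_nhds]
  intro ε hε
  obtain ⟨s₀, hs₀S, hs₀⟩ := exists_lt_of_csInf_lt hne (lt_add_of_pos_right d hε)
  obtain ⟨a, b, hab, hsab⟩ := hs₀S
  rw [pairBot, eventually_inf_principal]
  have hIoo : Ioo (0:ℝ) (Real.exp a) ∈ nhdsWithin (0:ℝ) (Ioi 0) :=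
    Ioo_mem_nhdsGT_of_mem ⟨le_refl 0, Real.exp_pos a⟩
  have hev : ∀ᶠ p : ℝ × ℝ in (nhdsWithin 0 (Ioi 0)) ×ˢ (nhdsWithin 0 (Ioi 0)),
      p.1 ∈ Ioo (0:ℝ) (Real.exp a) ∧ p.2 ∈ Ioo (0:ℝ) (Real.exp a) :=
    (show ∀ᶠ x in nhdsWithin (0:ℝ) (Ioi 0), x ∈ Ioo (0:ℝ) (Real.exp a) from hIoo).prod_mk
      (show ∀ᶠ x in nhdsWithin (0:ℝ) (Ioi 0), x ∈ Ioo (0:ℝ) (Real.exp a) from hIoo)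
  filter_upwards [hev] with p hp hne'
  obtain ⟨h1, h2⟩ := hp
  have ha1 : Real.log p.1 < a := by
    calc Real.log p.1 < Real.log (Real.exp a) := Real.log_lt_log h1.1 h1.2
      _ = a := Real.log_exp a
  have ha2 : Real.log p.2 < a := by
    calc Real.log p.2 < Real.log (Real.exp a) := Real.log_lt_log h2.1 h2.2
      _ = a := Real.log_exp a
  have hlogne : Real.log p.1 ≠ Real.log p.2 := fun hcon => hne' (by
    have := congrArg Real.exp hcon
    rwa [Real.exp_log h1.1, Real.exp_log h2.1] at this)
  have claim : ∀ u v : ℝ, u < v → v < a → |slope (G f) u v - d| < ε := by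
    intro u v huv hva
    have hge : d ≤ slope (G f) u v := csInf_le hbdd ⟨u, v, huv, rfl⟩
    have hle : slope (G f) u v ≤ s₀ := hsab ▸ slope_chain hg huv hva.le hab
    rw [abs_lt]; constructor <;> linarith
  rw [Real.dist_eq, logSlope_eq_slope f h1.1 h2.1]
  rcases lt_or_gt_of_ne hlogne with hlt | hgt
  · exact claim _ _ hlt ha2
  · rw [slope_comm]; exact claim _ _ hgt ha1

lemma expr_eq {f : ℝ → ℝ} (hfpos : ∀ t, 0 < t → 0 < f t) {t D : ℝ} (ht : 0 < t) :
    f t * t ^ (-D) = Real.exp (G f (Real.log t) - D * Real.log t) := by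
  have h1 : G f (Real.log t) = Real.log (f t) := by rw [G, Real.exp_log ht]
  rw [h1, Real.exp_sub, Real.exp_log (hfpos t ht), Real.rpow_def_of_pos ht, mul_comm]
  rw [mul_neg, Real.exp_neg, div_eq_mul_inv, mul_comm (Real.log t) D, mul_comm]

lemma tendsto_zero_top {f : ℝ → ℝ} (hfpos : ∀ t, 0 < t → 0 < f t) {dp D : ℝ}
    (hle : ∀ ⦃x y : ℝ⦄, x < y → slope (G f) x y ≤ dp) (hD : dp < D) :
    Tendsto (fun t => f t * t ^ (-D)) atTop (nhds 0) := by
  have hub : ∀ x : ℝ, 0 < x → G f x ≤ G f 0 + dp * x := by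
    intro x hx
    have := hle hx
    rw [slope_field, sub_zero, div_le_iff₀ hx] at this
    linarith
  have hupper : Tendsto (fun t : ℝ => Real.exp (G f 0 + (dp - D) * Real.log t)) atTop (nhds 0) := by
    apply Real.tendsto_exp_atBot.comp
    apply tendsto_atBot_add_const_left _ (G f 0)
    exact (tendsto_const_mul_atBot_of_neg (by linarith)).2 Real.tendsto_log_atTop
  refine tendsto_of_tendsto_of_tendsto_of_le_of_le' tendsto_const_nhds hupper ?_ ?_
  · filter_upwards [eventually_gt_atTop (1:ℝ)] with t ht
    have ht0 : 0 < t := by linarith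
    exact le_of_lt (by rw [expr_eq hfpos ht0]; exact Real.exp_pos _)
  · filter_upwards [eventually_gt_atTop (1:ℝ)] with t ht
    have ht0 : 0 < t := by linarith
    have hlt : 0 < Real.log t := Real.log_pos ht
    rw [expr_eq hfpos ht0]
    apply Real.exp_le_exp.2
    have := hub (Real.log t) hlt
    nlinarith

lemma tendsto_zero_bot {f : ℝ → ℝ} (hfpos : ∀ t, 0 < t → 0 < f t) {dm D : ℝ}
    (hge : ∀ ⦃x y : ℝ⦄, x < y → dm ≤ slope (G f) x y) (hD : D < dm) :
    Tendsto (fun t => f t * t ^ (-D)) (nhdsWithin 0 (Ioi 0)) (nhds 0) := by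
  have hub : ∀ x : ℝ, x < 0 → G f x ≤ G f 0 + dm * x := by
    intro x hx
    have := hge hx
    rw [slope_field, zero_sub, le_div_iff₀ (by linarith : (0:ℝ) < -x)] at this
    nlinarith
  have hupper : Tendsto (fun t : ℝ => Real.exp (G f 0 + (dm - D) * Real.log t))
      (nhdsWithin 0 (Ioi 0)) (nhds 0) := by
    apply Real.tendsto_exp_atBot.comp
    apply tendsto_atBot_add_const_left _ (G f 0)
    exact (tendsto_const_mul_atBot_of_pos (by linarith)).2 Real.tendsto_log_nhdsGT_zero
  refine tendsto_of_tendsto_of_tendsto_of_le_of_le' tendsto_const_nhds hupper ?_ ?_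
  · filter_upwards [eventually_mem_set.2 (Ioo_mem_nhdsGT_of_mem
      (⟨le_refl 0, zero_lt_one⟩ : (0:ℝ) ∈ Ico (0:ℝ) 1))] with t ht
    exact le_of_lt (by rw [expr_eq hfpos ht.1]; exact Real.exp_pos _)
  · filter_upwards [eventually_mem_set.2 (Ioo_mem_nhdsGT_of_mem
      (⟨le_refl 0, zero_lt_one⟩ : (0:ℝ) ∈ Ico (0:ℝ) 1))] with t ht
    have hlt : Real.log t < 0 := Real.log_neg ht.1 ht.2
    rw [expr_eq hfpos ht.1]
    apply Real.exp_le_exp.2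
    have := hub (Real.log t) hlt
    nlinarith

lemma not_tendsto_zero_top {f : ℝ → ℝ} (hfpos : ∀ t, 0 < t → 0 < f t)
    (hg : ConvexOn ℝ univ (G f)) {D a b : ℝ} (hab : a < b)
    (hs : D < slope (G f) a b) :
    ¬ Tendsto (fun t => f t * t ^ (-D)) atTop (nhds 0) := by
  set s := slope (G f) a b with hsdef
  have hlb : ∀ x : ℝ, b < x → G f b + s * (x - b) ≤ G f x := by
    intro x hx
    have h1 : s ≤ slope (G f) b x := slope_adj hg hab hx
    rw [slope_field, le_div_iff₀ (by linarith)] at h1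
    linarith
  have hlower : Tendsto (fun t : ℝ => Real.exp (G f b - s * b + (s - D) * Real.log t))
      atTop atTop := by
    apply Real.tendsto_exp_atTop.comp
    apply tendsto_atTop_add_const_left _ (G f b - s * b)
    exact (tendsto_const_mul_atTop_of_pos (by linarith)).2 Real.tendsto_log_atTop
  have hmain : Tendsto (fun t => f t * t ^ (-D)) atTop atTop := by
    apply tendsto_atTop_mono' atTop ?_ hlower
    filter_upwards [eventually_gt_atTop (Real.exp b)] with t ht
    have ht0 : 0 < t := lt_trans (Real.exp_pos b) ht
    have hbt : b < Real.log t := by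
      calc b = Real.log (Real.exp b) := (Real.log_exp b).symm
        _ < Real.log t := Real.log_lt_log (Real.exp_pos b) ht
    rw [expr_eq hfpos ht0]
    apply Real.exp_le_exp.2
    have := hlb (Real.log t) hbt
    nlinarith
  exact not_tendsto_nhds_of_tendsto_atTop hmain 0

lemma not_tendsto_zero_bot {f : ℝ → ℝ} (hfpos : ∀ t, 0 < t → 0 < f t)
    (hg : ConvexOn ℝ univ (G f)) {D a b : ℝ} (hab : a < b)
    (hs : slope (G f) a b < D) :
    ¬ Tendsto (fun t => f t * t ^ (-D)) (nhdsWithin 0 (Ioi 0)) (nhds 0) := by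
  set s := slope (G f) a b with hsdef
  have hlb : ∀ x : ℝ, x < a → G f a + s * (x - a) ≤ G f x := by
    intro x hx
    have h1 : slope (G f) x a ≤ s := slope_adj hg hx hab
    rw [slope_field, div_le_iff₀ (by linarith)] at h1
    linarith
  have hlower : Tendsto (fun t : ℝ => Real.exp (G f a - s * a + (s - D) * Real.log t))
      (nhdsWithin 0 (Ioi 0)) atTop := by
    apply Real.tendsto_exp_atTop.comp
    apply tendsto_atTop_add_const_left _ (G f a - s * a)
    exact (tendsto_const_mul_atTop_of_neg (by linarith)).2 Real.tendsto_log_nhdsGT_zero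
  have hmain : Tendsto (fun t => f t * t ^ (-D)) (nhdsWithin 0 (Ioi 0)) atTop := by
    apply tendsto_atTop_mono' _ ?_ hlower
    filter_upwards [eventually_mem_set.2 (Ioo_mem_nhdsGT_of_mem
      (⟨le_refl 0, Real.exp_pos a⟩ : (0:ℝ) ∈ Ico (0:ℝ) (Real.exp a)))] with t ht
    have hta : Real.log t < a := by
      calc Real.log t < Real.log (Real.exp a) := Real.log_lt_log ht.1 ht.2
        _ = a := Real.log_exp a
    rw [expr_eq hfpos ht.1]
    apply Real.exp_le_exp.2
    have := hlb (Real.log t) hta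
    nlinarith
  exact not_tendsto_nhds_of_tendsto_atTop hmain 0

theorem stmt5 (f : ℝ → ℝ) (hfpos : ∀ t, 0 < t → 0 < f t) (hconv : MulConvex f) :
    ((∃ R > (0:ℝ), ∀ t₀ t₁ : ℝ, 0 < t₀ → 0 < t₁ → t₀ ≠ t₁ →
        |Real.log (f t₁) - Real.log (f t₀)| ≤ R * |Real.log t₁ - Real.log t₀|) ↔
      ((∃ d : ℝ, Tendsto (fun p : ℝ × ℝ => logSlope f p.1 p.2) pairTop (nhds d)) ∧
       (∃ d : ℝ, Tendsto (fun p : ℝ × ℝ => logSlope f p.1 p.2) pairBot (nhds d)))) ∧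
    (∀ dp dm : ℝ,
      Tendsto (fun p : ℝ × ℝ => logSlope f p.1 p.2) pairTop (nhds dp) →
      Tendsto (fun p : ℝ × ℝ => logSlope f p.1 p.2) pairBot (nhds dm) →
      dp = sInf {D : ℝ | Tendsto (fun t => f t * t ^ (-D)) atTop (nhds 0)} ∧
      dm = sSup {D : ℝ | Tendsto (fun t => f t * t ^ (-D)) (nhdsWithin 0 (Ioi 0)) (nhds 0)}) := by
  have hg : ConvexOn ℝ univ (G f) := convexG f hfpos hconv
  have hGlog : ∀ t : ℝ, 0 < t → G f (Real.log t) = Real.log (f t) := by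
    intro t ht; rw [G, Real.exp_log ht]
  constructor
  · constructor
    · rintro ⟨R, hR, hRb⟩
      have hRx : ∀ x y : ℝ, x ≠ y → |slope (G f) x y| ≤ R := by
        intro x y hxy
        have hkey := hRb (Real.exp x) (Real.exp y) (Real.exp_pos x) (Real.exp_pos y)
          (fun h => hxy (Real.exp_injective h))
        rw [Real.log_exp, Real.log_exp] at hkey
        rw [slope_field, abs_div, div_le_iff₀ (abs_pos.2 (sub_ne_zero.2 (Ne.symm hxy)))]
        calc |G f y - G f x| = |Real.log (f (Real.exp y)) - Real.log (f (Real.exp x))| := rfl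
          _ ≤ R * |y - x| := hkey
      exact ⟨⟨_, tendsto_top_of_bdd hg hRx⟩, ⟨_, tendsto_bot_of_bdd hg hRx⟩⟩
    · rintro ⟨⟨dp, hdp⟩, ⟨dm, hdm⟩⟩
      refine ⟨|dp| + |dm| + 1, by positivity, ?_⟩
      intro t₀ t₁ h0 h1 hne
      have hlogne : Real.log t₀ ≠ Real.log t₁ := fun hcon => hne (by
        have := congrArg Real.exp hcon
        rwa [Real.exp_log h0, Real.exp_log h1] at this)
      have hsb : ∀ x y : ℝ, x ≠ y →
          |slope (G f) x y| ≤ |dp| + |dm| + 1 := by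
        intro x y hxy
        have hbound : ∀ u v : ℝ, u < v → |slope (G f) u v| ≤ |dp| + |dm| + 1 := by
          intro u v huv
          have h1 : slope (G f) u v ≤ dp := slope_le_dtop hg hdp huv
          have h2 : dm ≤ slope (G f) u v := dbot_le_slope hg hdm huv
          rw [abs_le]
          constructor
          · have := neg_abs_le dm; linarith [abs_nonneg dp]
          · have := le_abs_self dp; linarith [abs_nonneg dm]
        rcases lt_or_gt_of_ne hxy with h | h
        · exact hbound x y h
        · rw [slope_comm]; exact hbound y x h
      have heq : Real.log (f t₁) - Real.log (f t₀) =
          slope (G f) (Real.log t₀) (Real.log t₁) * (Real.log t₁ - Real.log t₀) := by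
        rw [slope_field, hGlog t₀ h0, hGlog t₁ h1,
          div_mul_cancel₀ _ (sub_ne_zero.2 (Ne.symm hlogne))]
      rw [heq, abs_mul]
      exact mul_le_mul_of_nonneg_right (hsb _ _ hlogne) (abs_nonneg _)
  · intro dp dm htop hbot
    have hle : ∀ ⦃x y : ℝ⦄, x < y → slope (G f) x y ≤ dp :=
      fun x y h => slope_le_dtop hg htop h
    have hge : ∀ ⦃x y : ℝ⦄, x < y → dm ≤ slope (G f) x y :=
      fun x y h => dbot_le_slope hg hbot h
    have hlow : ∀ D ∈ {D : ℝ | Tendsto (fun t => f t * t ^ (-D)) atTop (nhds 0)}, dp ≤ D := by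
      intro D hD
      by_contra hcon
      push_neg at hcon
      obtain ⟨x, y, _, hxy, habs⟩ := exists_pair_top htop (sub_pos.2 hcon) 0
      have : D < slope (G f) x y := by
        have := (abs_lt.1 habs).1; linarith
      exact not_tendsto_zero_top hfpos hg hxy this hD
    have hup : ∀ D ∈ {D : ℝ | Tendsto (fun t => f t * t ^ (-D))
        (nhdsWithin 0 (Ioi 0)) (nhds 0)}, D ≤ dm := by
      intro D hD
      by_contra hcon
      push_neg at hcon
      obtain ⟨x, y, hxy, _, habs⟩ := exists_pair_bot hbot (sub_pos.2 hcon) 0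
      have : slope (G f) x y < D := by
        have := (abs_lt.1 habs).2; linarith
      exact not_tendsto_zero_bot hfpos hg hxy this hD
    constructor
    · refine le_antisymm (le_csInf ⟨dp + 1, tendsto_zero_top hfpos hle (by linarith)⟩ hlow) ?_
      refine le_of_forall_pos_le_add fun ε hε => ?_
      exact csInf_le ⟨dp, hlow⟩ (tendsto_zero_top hfpos hle (by linarith))
    · refine le_antisymm ?_
        (csSup_le ⟨dm - 1, tendsto_zero_bot hfpos hge (by linarith)⟩ hup)
      refine le_of_forall_pos_le_add fun ε hε => ?_
      have := le_csSup ⟨dm, hup⟩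
        (show dm - ε ∈ _ from tendsto_zero_bot hfpos hge (by linarith))
      linarith
end

section
/- A continuous piecewise monomial function f : (a,b) → (0,∞), equal to C_i · t^{r_i} on consecutive subintervals (c_{i-1}, c_i) for a = c₀ < c₁ < ⋯ < c_n = b, is multiplicatively convex if and only if r₁ ≤ r₂ ≤ ⋯ ≤ r_n. -/
open Real Set Filter Topology

theorem stmt7 (a b : ℝ) (ha : 0 < a) (hab : a < b) (n : ℕ) (hn : 0 < n)
    (c : ℕ → ℝ) (hc0 : c 0 = a) (hcn : c n = b) (hcmono : ∀ i < n, c i < c (i + 1))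
    (C r : ℕ → ℝ) (hC : ∀ i < n, 0 < C i)
    (f : ℝ → ℝ) (hcont : ContinuousOn f (Ioo a b)) (hpos : ∀ t ∈ Ioo a b, 0 < f t)
    (hpiece : ∀ i < n, ∀ t ∈ Ioo (c i) (c (i + 1)), f t = C i * t ^ (r i)) :
    (∀ t₀ ∈ Ioo a b, ∀ t₁ ∈ Ioo a b, ∀ l : ℝ, 0 < l → l < 1 →
        f (t₀ ^ l * t₁ ^ (1 - l)) ≤ f t₀ ^ l * f t₁ ^ (1 - l)) ↔
      (∀ i : ℕ, i + 1 < n → r i ≤ r (i + 1)) := by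
  classical
  -- monotonicity of c
  have hcled : ∀ d i, i + d ≤ n → c i ≤ c (i + d) := by
    intro d
    induction d with
    | zero => intro i _; simp
    | succ d ih =>
      intro i h
      have h1 : c i ≤ c (i + d) := ih i (by omega)
      have h2 : c (i + d) < c (i + d + 1) := hcmono (i + d) (by omega)
      have he : i + (d + 1) = i + d + 1 := by omega
      rw [he]; linarith
  have hcle : ∀ i j, i ≤ j → j ≤ n → c i ≤ c j := by
    intro i j hij hjn
    have := hcled (j - i) i (by omega)
    rwa [show i + (j - i) = j by omega] at this
  have hca : ∀ i, i ≤ n → a ≤ c i := by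
    intro i hi; have := hcle 0 i (by omega) hi; rwa [hc0] at this
  have hcb : ∀ i, i ≤ n → c i ≤ b := by
    intro i hi; have := hcle i n hi le_rfl; rwa [hcn] at this
  have hcpos : ∀ i, i ≤ n → 0 < c i := fun i hi => lt_of_lt_of_le ha (hca i hi)
  -- right limit at c j
  have hfr : ∀ j, j < n → a < c j → f (c j) = C j * (c j) ^ (r j) := by
    intro j hj haj
    have hcc : c j < c (j + 1) := hcmono j hj
    have hmem : c j ∈ Ioo a b :=
      ⟨haj, lt_of_lt_of_le hcc (hcb (j + 1) (by omega))⟩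
    have hsub : Ioo (c j) (c (j + 1)) ⊆ Ioo a b := by
      intro t ht
      exact ⟨lt_trans haj ht.1, lt_of_lt_of_le ht.2 (hcb (j + 1) (by omega))⟩
    haveI : (𝓝[Ioo (c j) (c (j + 1))] (c j)).NeBot := by
      rw [nhdsWithin_Ioo_eq_nhdsGT hcc]; infer_instance
    have h1 : Tendsto f (𝓝[Ioo (c j) (c (j + 1))] (c j)) (𝓝 (f (c j))) :=
      (hcont (c j) hmem).mono hsub
    have h2 : Tendsto (fun t => C j * t ^ (r j)) (𝓝[Ioo (c j) (c (j + 1))] (c j))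
        (𝓝 (C j * (c j) ^ (r j))) := by
      apply Tendsto.mono_left _ nhdsWithin_le_nhds
      exact (continuousAt_const.mul
        (Real.continuousAt_rpow_const _ _ (Or.inl (ne_of_gt (hcpos j (by omega)))))).tendsto
    have h3 : Tendsto (fun t => C j * t ^ (r j)) (𝓝[Ioo (c j) (c (j + 1))] (c j))
        (𝓝 (f (c j))) := by
      apply Tendsto.congr' _ h1
      filter_upwards [self_mem_nhdsWithin] with t ht
      exact hpiece j hj t ht
    exact tendsto_nhds_unique h3 h2
  -- left limit at c (j+1)
  have hfl : ∀ j, j < n → c (j + 1) < b → f (c (j + 1)) = C j * (c (j + 1)) ^ (r j) := by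
    intro j hj hjb
    have hcc : c j < c (j + 1) := hcmono j hj
    have hmem : c (j + 1) ∈ Ioo a b :=
      ⟨lt_of_le_of_lt (hca j (by omega)) hcc, hjb⟩
    have hsub : Ioo (c j) (c (j + 1)) ⊆ Ioo a b := by
      intro t ht
      exact ⟨lt_of_le_of_lt (hca j (by omega)) ht.1, lt_trans ht.2 hjb⟩
    haveI : (𝓝[Ioo (c j) (c (j + 1))] (c (j + 1))).NeBot := by
      rw [nhdsWithin_Ioo_eq_nhdsLT hcc]; infer_instance
    have h1 : Tendsto f (𝓝[Ioo (c j) (c (j + 1))] (c (j + 1))) (𝓝 (f (c (j + 1)))) :=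
      (hcont (c (j + 1)) hmem).mono hsub
    have h2 : Tendsto (fun t => C j * t ^ (r j)) (𝓝[Ioo (c j) (c (j + 1))] (c (j + 1)))
        (𝓝 (C j * (c (j + 1)) ^ (r j))) := by
      apply Tendsto.mono_left _ nhdsWithin_le_nhds
      exact (continuousAt_const.mul
        (Real.continuousAt_rpow_const _ _ (Or.inl (ne_of_gt (hcpos (j + 1) (by omega)))))).tendsto
    have h3 : Tendsto (fun t => C j * t ^ (r j)) (𝓝[Ioo (c j) (c (j + 1))] (c (j + 1)))
        (𝓝 (f (c (j + 1)))) := by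
      apply Tendsto.congr' _ h1
      filter_upwards [self_mem_nhdsWithin] with t ht
      exact hpiece j hj t ht
    exact tendsto_nhds_unique h3 h2
  -- matching at interior breakpoints
  have hE : ∀ j, j + 1 < n →
      C j * (c (j + 1)) ^ (r j) = C (j + 1) * (c (j + 1)) ^ (r (j + 1)) := by
    intro j hj
    have h1 := hfl j (by omega)
      (lt_of_lt_of_le (hcmono (j + 1) hj) (hcb (j + 2) (by omega)))
    have h2 := hfr (j + 1) hj
      (lt_of_le_of_lt (hca j (by omega)) (hcmono j (by omega)))
    rw [← h1, ← h2]
  -- locate a point in a piece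
  have hfind : ∀ t, t ∈ Ioo a b → ∃ j, j < n ∧ c j ≤ t ∧ t < c (j + 1) := by
    intro t ht
    set P := fun j => c j ≤ t with hP
    have hP0 : P 0 := by rw [hP]; simp only; rw [hc0]; exact le_of_lt ht.1
    set j := Nat.findGreatest P n with hjdef
    have hPj : P j := Nat.findGreatest_spec (Nat.zero_le n) hP0
    have hjn : j ≤ n := Nat.findGreatest_le n
    have hjlt : j < n := by
      rcases eq_or_lt_of_le hjn with h | h
      · exfalso
        have h2 : c j ≤ t := hPj
        rw [h, hcn] at h2
        exact absurd ht.2 (not_lt.mpr h2)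
      · exact h
    refine ⟨j, hjlt, hPj, ?_⟩
    by_contra hcon
    have h2 : P (j + 1) := not_lt.mp hcon
    have := Nat.le_findGreatest (by omega : j + 1 ≤ n) h2
    omega
  -- value on half-open pieces
  have hfeq : ∀ j, j < n → ∀ t, a < t → c j ≤ t → t < c (j + 1) → f t = C j * t ^ (r j) := by
    intro j hj t hat hct htc
    rcases eq_or_lt_of_le hct with h | h
    · rw [← h] at hat ⊢; exact hfr j hj hat
    · exact hpiece j hj t ⟨h, htc⟩
  constructor
  · -- convexity implies slopes nondecreasing
    intro hconv i hi
    have hci : 0 < c i := hcpos i (by omega)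
    have hci1 : 0 < c (i + 1) := hcpos (i + 1) (by omega)
    set m := min (c (i + 1) / c i) (c (i + 2) / c (i + 1)) with hm
    have hm1 : 1 < m := by
      apply lt_min
      · rw [lt_div_iff₀ hci]; simpa using hcmono i (by omega)
      · rw [lt_div_iff₀ hci1]; simpa using hcmono (i + 1) hi
    set u := Real.sqrt m with hu
    have hu1 : 1 < u := by
      rw [hu, show (1:ℝ) = Real.sqrt 1 by simp]
      exact Real.sqrt_lt_sqrt (by norm_num) hm1
    have hu0 : 0 < u := lt_trans one_pos hu1
    have hum : u < m := by
      rw [hu]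
      rw [Real.sqrt_lt' (lt_trans one_pos hm1)] at *
      nlinarith
    set t₀ := c (i + 1) / u with ht₀def
    set t₁ := c (i + 1) * u with ht₁def
    have ht₀pos : 0 < t₀ := by positivity
    have ht₁pos : 0 < t₁ := by positivity
    have ht₀lt : t₀ < c (i + 1) := div_lt_self hci1 hu1
    have ht₀gt : c i < t₀ := by
      rw [ht₀def, lt_div_iff₀ hu0]
      have h1 : u < c (i + 1) / c i := lt_of_lt_of_le hum (min_le_left _ _)
      rw [lt_div_iff₀ hci] at h1
      linarith
    have ht₁gt : c (i + 1) < t₁ := lt_mul_of_one_lt_right hci1 hu1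
    have ht₁lt : t₁ < c (i + 2) := by
      have h1 : u < c (i + 2) / c (i + 1) := lt_of_lt_of_le hum (min_le_right _ _)
      rw [lt_div_iff₀ hci1] at h1
      rw [ht₁def]; linarith
    have ht₀mem : t₀ ∈ Ioo a b :=
      ⟨lt_of_le_of_lt (hca i (by omega)) ht₀gt,
       lt_of_lt_of_le ht₀lt (hcb (i + 1) (by omega))⟩
    have ht₁mem : t₁ ∈ Ioo a b :=
      ⟨lt_of_le_of_lt (hca (i + 1) (by omega)) ht₁gt,
       lt_of_lt_of_le ht₁lt (hcb (i + 2) (by omega))⟩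
    have hkey := hconv t₀ ht₀mem t₁ ht₁mem (1/2) (by norm_num) (by norm_num)
    have hprod : t₀ ^ ((1:ℝ)/2) * t₁ ^ (1 - (1:ℝ)/2) = c (i + 1) := by
      rw [show (1:ℝ) - 1/2 = 1/2 by norm_num,
          ← Real.mul_rpow (le_of_lt ht₀pos) (le_of_lt ht₁pos)]
      have : t₀ * t₁ = c (i + 1) * c (i + 1) := by
        rw [ht₀def, ht₁def]; field_simp
      rw [this, ← Real.sqrt_eq_rpow, Real.sqrt_mul_self (le_of_lt hci1)]
    rw [hprod] at hkey
    have hf₀ : f t₀ = C i * t₀ ^ (r i) := hpiece i (by omega) t₀ ⟨ht₀gt, ht₀lt⟩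
    have hf₁ : f t₁ = C (i + 1) * t₁ ^ (r (i + 1)) := hpiece (i + 1) hi t₁ ⟨ht₁gt, ht₁lt⟩
    have hfc : f (c (i + 1)) = C i * (c (i + 1)) ^ (r i) :=
      hfl i (by omega) (lt_of_lt_of_le (hcmono (i + 1) hi) (hcb (i + 2) (by omega)))
    rw [hfc, hf₀, hf₁] at hkey
    -- take logs
    have hCi : 0 < C i := hC i (by omega)
    have hCi1 : 0 < C (i + 1) := hC (i + 1) hi
    have hlog := Real.log_le_log (by positivity) hkey
    have e1 : Real.log (C i * (c (i + 1)) ^ (r i)) =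
        Real.log (C i) + r i * Real.log (c (i + 1)) := by
      rw [Real.log_mul (ne_of_gt hCi) (ne_of_gt (Real.rpow_pos_of_pos hci1 _)),
          Real.log_rpow hci1]
    have e2 : Real.log ((C i * t₀ ^ (r i)) ^ ((1:ℝ)/2) *
        (C (i + 1) * t₁ ^ (r (i + 1))) ^ (1 - (1:ℝ)/2)) =
        (1/2) * (Real.log (C i) + r i * Real.log t₀) +
        (1/2) * (Real.log (C (i + 1)) + r (i + 1) * Real.log t₁) := by
      rw [show (1:ℝ) - 1/2 = 1/2 by norm_num]
      rw [Real.log_mul (ne_of_gt (Real.rpow_pos_of_pos (by positivity) _))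
            (ne_of_gt (Real.rpow_pos_of_pos (by positivity) _)),
          Real.log_rpow (by positivity), Real.log_rpow (by positivity),
          Real.log_mul (ne_of_gt hCi) (ne_of_gt (Real.rpow_pos_of_pos ht₀pos _)),
          Real.log_mul (ne_of_gt hCi1) (ne_of_gt (Real.rpow_pos_of_pos ht₁pos _)),
          Real.log_rpow ht₀pos, Real.log_rpow ht₁pos]
    have e3 : Real.log t₀ = Real.log (c (i + 1)) - Real.log u := by
      rw [ht₀def, Real.log_div (ne_of_gt hci1) (ne_of_gt hu0)]
    have e4 : Real.log t₁ = Real.log (c (i + 1)) + Real.log u := by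
      rw [ht₁def, Real.log_mul (ne_of_gt hci1) (ne_of_gt hu0)]
    have e5 : Real.log (C i) + r i * Real.log (c (i + 1)) =
        Real.log (C (i + 1)) + r (i + 1) * Real.log (c (i + 1)) := by
      have := hE i hi
      have h1 := congrArg Real.log this
      rwa [Real.log_mul (ne_of_gt hCi) (ne_of_gt (Real.rpow_pos_of_pos hci1 _)),
          Real.log_mul (ne_of_gt hCi1) (ne_of_gt (Real.rpow_pos_of_pos hci1 _)),
          Real.log_rpow hci1, Real.log_rpow hci1] at h1
    rw [e1, e2, e3, e4] at hlog
    have hlogu : 0 < Real.log u := Real.log_pos hu1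
    nlinarith [hlog, e5, hlogu]
  · -- slopes nondecreasing implies convexity
    intro hr t₀ ht₀ t₁ ht₁ l hl0 hl1
    have ht₀pos : 0 < t₀ := lt_trans ha ht₀.1
    have ht₁pos : 0 < t₁ := lt_trans ha ht₁.1
    -- step lemmas
    have step_up : ∀ j, j + 1 < n → ∀ t, c (j + 1) ≤ t →
        C j * t ^ (r j) ≤ C (j + 1) * t ^ (r (j + 1)) := by
      intro j hj t hct
      have hc1 : 0 < c (j + 1) := hcpos (j + 1) (by omega)
      have htpos : 0 < t := lt_of_lt_of_le hc1 hct
      have hdiv : 1 ≤ t / c (j + 1) := (one_le_div hc1).mpr hct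
      have key : (t / c (j + 1)) ^ (r j) ≤ (t / c (j + 1)) ^ (r (j + 1)) :=
        Real.rpow_le_rpow_of_exponent_le hdiv (hr j hj)
      have expand : ∀ s : ℝ, t ^ s = c (j + 1) ^ s * (t / c (j + 1)) ^ s := by
        intro s
        rw [← Real.mul_rpow (le_of_lt hc1) (by positivity)]
        congr 1
        field_simp
      have hCj : 0 < C j := hC j (by omega)
      calc C j * t ^ (r j) = (C j * c (j + 1) ^ (r j)) * (t / c (j + 1)) ^ (r j) := by
            rw [expand]; ring
        _ ≤ (C j * c (j + 1) ^ (r j)) * (t / c (j + 1)) ^ (r (j + 1)) :=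
            mul_le_mul_of_nonneg_left key (by positivity)
        _ = (C (j + 1) * c (j + 1) ^ (r (j + 1))) * (t / c (j + 1)) ^ (r (j + 1)) := by
            rw [hE j hj]
        _ = C (j + 1) * t ^ (r (j + 1)) := by rw [expand]; ring
    have step_down : ∀ j, j + 1 < n → ∀ t, 0 < t → t ≤ c (j + 1) →
        C (j + 1) * t ^ (r (j + 1)) ≤ C j * t ^ (r j) := by
      intro j hj t htpos hct
      have hc1 : 0 < c (j + 1) := hcpos (j + 1) (by omega)
      have hdivpos : 0 < t / c (j + 1) := by positivity
      have hdiv : t / c (j + 1) ≤ 1 := (div_le_one hc1).mpr hct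
      have key : (t / c (j + 1)) ^ (r (j + 1)) ≤ (t / c (j + 1)) ^ (r j) :=
        Real.rpow_le_rpow_of_exponent_ge hdivpos hdiv (hr j hj)
      have expand : ∀ s : ℝ, t ^ s = c (j + 1) ^ s * (t / c (j + 1)) ^ s := by
        intro s
        rw [← Real.mul_rpow (le_of_lt hc1) (by positivity)]
        congr 1
        field_simp
      have hCj : 0 < C j := hC j (by omega)
      calc C (j + 1) * t ^ (r (j + 1))
          = (C (j + 1) * c (j + 1) ^ (r (j + 1))) * (t / c (j + 1)) ^ (r (j + 1)) := by
            rw [expand]; ring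
        _ = (C j * c (j + 1) ^ (r j)) * (t / c (j + 1)) ^ (r (j + 1)) := by
            rw [hE j hj]
        _ ≤ (C j * c (j + 1) ^ (r j)) * (t / c (j + 1)) ^ (r j) :=
            mul_le_mul_of_nonneg_left key (by positivity)
        _ = C j * t ^ (r j) := by rw [expand]; ring
    have M1 : ∀ d j, j + d < n → ∀ t, c (j + d) ≤ t →
        C j * t ^ (r j) ≤ C (j + d) * t ^ (r (j + d)) := by
      intro d
      induction d with
      | zero => intro j _ t _; simp
      | succ d ih =>
        intro j hjd t hct
        have h1 : c (j + d) ≤ t :=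
          le_trans (hcle (j + d) (j + d + 1) (by omega) (by omega)) hct
        have h2 := ih j (by omega) t h1
        have h3 := step_up (j + d) (by omega) t hct
        exact le_trans h2 h3
    have M2 : ∀ d j, j + d < n → ∀ t, 0 < t → t ≤ c (j + 1) →
        C (j + d) * t ^ (r (j + d)) ≤ C j * t ^ (r j) := by
      intro d
      induction d with
      | zero => intro j _ t _ _; simp
      | succ d ih =>
        intro j hjd t htpos hct
        have h1 : t ≤ c (j + 1 + 1) :=
          le_trans hct (hcle (j + 1) (j + 2) (by omega) (by omega))
        have h2 := ih (j + 1) (by omega) t htpos h1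
        rw [show j + 1 + d = j + d + 1 by omega] at h2
        have h3 := step_down j (by omega) t htpos hct
        exact le_trans h2 h3
    have M : ∀ i j, i < n → j < n → ∀ t, 0 < t → c j ≤ t → t ≤ c (j + 1) →
        C i * t ^ (r i) ≤ C j * t ^ (r j) := by
      intro i j hi hj t htpos hc1 hc2
      rcases le_total i j with h | h
      · have := M1 (j - i) i (by omega) t (by rwa [show i + (j - i) = j by omega])
        rwa [show i + (j - i) = j by omega] at this
      · have := M2 (i - j) j (by omega) t htpos hc2
        rwa [show j + (i - j) = i by omega] at this
    -- the geometric mean lies in (a,b)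
    set t := t₀ ^ l * t₁ ^ (1 - l) with htdef
    have htpos : 0 < t := by positivity
    have htmem : t ∈ Ioo a b := by
      rcases le_total t₀ t₁ with h | h
      · constructor
        · calc a < t₀ := ht₀.1
            _ = t₀ ^ l * t₀ ^ (1 - l) := by
                rw [← Real.rpow_add ht₀pos]; norm_num
            _ ≤ t₀ ^ l * t₁ ^ (1 - l) :=
                mul_le_mul_of_nonneg_left
                  (Real.rpow_le_rpow (le_of_lt ht₀pos) h (by linarith)) (by positivity)
        · calc t ≤ t₁ ^ l * t₁ ^ (1 - l) := by
                rw [htdef]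
                exact mul_le_mul_of_nonneg_right
                  (Real.rpow_le_rpow (le_of_lt ht₀pos) h (le_of_lt hl0)) (by positivity)
            _ = t₁ := by rw [← Real.rpow_add ht₁pos]; norm_num
            _ < b := ht₁.2
      · constructor
        · calc a < t₁ := ht₁.1
            _ = t₁ ^ l * t₁ ^ (1 - l) := by
                rw [← Real.rpow_add ht₁pos]; norm_num
            _ ≤ t₀ ^ l * t₁ ^ (1 - l) :=
                mul_le_mul_of_nonneg_right
                  (Real.rpow_le_rpow (le_of_lt ht₁pos) h (le_of_lt hl0)) (by positivity)
        · calc t ≤ t₀ ^ l * t₀ ^ (1 - l) := by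
                rw [htdef]
                exact mul_le_mul_of_nonneg_left
                  (Real.rpow_le_rpow (le_of_lt ht₁pos) h (by linarith)) (by positivity)
            _ = t₀ := by rw [← Real.rpow_add ht₀pos]; norm_num
            _ < b := ht₀.2
    obtain ⟨j, hj, hcj, hjc⟩ := hfind t htmem
    obtain ⟨j₀, hj₀, h₀1, h₀2⟩ := hfind t₀ ht₀
    obtain ⟨j₁, hj₁, h₁1, h₁2⟩ := hfind t₁ ht₁
    have hft : f t = C j * t ^ (r j) := hfeq j hj t htmem.1 hcj hjc
    have hft₀ : f t₀ = C j₀ * t₀ ^ (r j₀) := hfeq j₀ hj₀ t₀ ht₀.1 h₀1 h₀2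
    have hft₁ : f t₁ = C j₁ * t₁ ^ (r j₁) := hfeq j₁ hj₁ t₁ ht₁.1 h₁1 h₁2
    have hM0 : C j * t₀ ^ (r j) ≤ f t₀ := by
      rw [hft₀]; exact M j j₀ hj hj₀ t₀ ht₀pos h₀1 (le_of_lt h₀2)
    have hM1' : C j * t₁ ^ (r j) ≤ f t₁ := by
      rw [hft₁]; exact M j j₁ hj hj₁ t₁ ht₁pos h₁1 (le_of_lt h₁2)
    have hCj : 0 < C j := hC j hj
    have expand : C j * t ^ (r j) = (C j * t₀ ^ (r j)) ^ l * (C j * t₁ ^ (r j)) ^ (1 - l) := by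
      rw [Real.mul_rpow (le_of_lt hCj) (by positivity),
          Real.mul_rpow (le_of_lt hCj) (by positivity), htdef,
          Real.mul_rpow (by positivity) (by positivity),
          ← Real.rpow_mul (le_of_lt ht₀pos), ← Real.rpow_mul (le_of_lt ht₁pos),
          ← Real.rpow_mul (le_of_lt ht₀pos), ← Real.rpow_mul (le_of_lt ht₁pos),
          mul_comm l (r j), mul_comm (1 - l) (r j)]
      have hC' : C j ^ l * C j ^ (1 - l) = C j := by
        rw [← Real.rpow_add hCj]; norm_num
      calc C j * (t₀ ^ (r j * l) * t₁ ^ (r j * (1 - l)))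
          = (C j ^ l * C j ^ (1 - l)) * (t₀ ^ (r j * l) * t₁ ^ (r j * (1 - l))) := by
            rw [hC']
        _ = C j ^ l * t₀ ^ (r j * l) * (C j ^ (1 - l) * t₁ ^ (r j * (1 - l))) := by ring
    rw [hft, expand]
    exact mul_le_mul
      (Real.rpow_le_rpow (by positivity) hM0 (le_of_lt hl0))
      (Real.rpow_le_rpow (by positivity) hM1' (by linarith))
      (by positivity)
      (le_of_lt (Real.rpow_pos_of_pos (hpos t₀ ht₀) l))
end

section
/- Let F : ℝ → ℝ be convex with all chord slopes bounded in absolute value by R, and suppose every chord of the graph of F has Y-intercept ≥ L, i.e. (F(x₀)x₁ − F(x₁)x₀)/(x₁ − x₀) ≥ L for all distinct x₀, x₁. Then as x → +∞, F(x) − d₊·x converges to a finite limit β₊ ∈ [L, F(0)], where d₊ = lim_{x→+∞} F(x)/x. -/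
open Real Set Filter

theorem stmt11 (F : ℝ → ℝ) (R L : ℝ) (hconv : ConvexOn ℝ univ F)
    (hR : ∀ x₀ x₁ : ℝ, x₀ ≠ x₁ → |(F x₁ - F x₀) / (x₁ - x₀)| ≤ R)
    (hL : ∀ x₀ x₁ : ℝ, x₀ ≠ x₁ → L ≤ (F x₀ * x₁ - F x₁ * x₀) / (x₁ - x₀)) :
    ∃ d β : ℝ, Tendsto (fun x => F x / x) atTop (nhds d) ∧
      β ∈ Icc L (F 0) ∧ Tendsto (fun x => F x - d * x) atTop (nhds β) := by
  -- the truncated slope-from-0 function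
  set s : ℝ → ℝ := fun x => (F (max x 1) - F 0) / (max x 1 - 0) with hs
  have hsmono : Monotone s := by
    intro x y hxy
    have h1 : (1:ℝ) ≤ max x 1 := le_max_right _ _
    have h2 : (1:ℝ) ≤ max y 1 := le_max_right _ _
    exact hconv.secant_mono (mem_univ 0) (mem_univ _) (mem_univ _)
      (by linarith) (by linarith) (max_le_max hxy le_rfl)
  have hsbdd : BddAbove (Set.range s) := by
    refine ⟨R, ?_⟩
    rintro _ ⟨x, rfl⟩
    have h1 : (1:ℝ) ≤ max x 1 := le_max_right _ _
    have := hR 0 (max x 1) (by intro h; rw [← h] at h1; linarith)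
    calc s x ≤ |(F (max x 1) - F 0) / (max x 1 - 0)| := le_abs_self _
      _ ≤ R := this
  set d : ℝ := ⨆ x, s x with hd
  have hstend : Tendsto s atTop (nhds d) := tendsto_atTop_ciSup hsmono hsbdd
  -- slope from 0 tends to d
  have hslope0 : Tendsto (fun x => (F x - F 0) / (x - 0)) atTop (nhds d) := by
    refine hstend.congr' ?_
    filter_upwards [eventually_ge_atTop (1:ℝ)] with x hx
    rw [hs]; simp only [max_eq_left hx]
  -- slope from any point tends to d
  have hslope : ∀ x₀ : ℝ, Tendsto (fun x => (F x - F x₀) / (x - x₀)) atTop (nhds d) := by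
    intro x₀
    have hfrac : Tendsto (fun x : ℝ => x / (x - x₀)) atTop (nhds 1) := by
      have h1 : Tendsto (fun x : ℝ => 1 + x₀ / (x - x₀)) atTop (nhds (1 + 0)) :=
        tendsto_const_nhds.add (tendsto_const_nhds.div_atTop
          (tendsto_atTop_add_const_right _ (-x₀) tendsto_id))
      rw [add_zero] at h1
      refine h1.congr' ?_
      filter_upwards [eventually_gt_atTop x₀] with x hx
      have : x - x₀ ≠ 0 := sub_ne_zero.mpr hx.ne'
      field_simp
      ring
    have h2 : Tendsto (fun x : ℝ => (F x - F 0) / (x - 0) * (x / (x - x₀))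
        + (F 0 - F x₀) / (x - x₀)) atTop (nhds (d * 1 + 0)) :=
      (hslope0.mul hfrac).add (tendsto_const_nhds.div_atTop
        (tendsto_atTop_add_const_right _ (-x₀) tendsto_id))
    rw [mul_one, add_zero] at h2
    refine h2.congr' ?_
    filter_upwards [eventually_gt_atTop x₀, eventually_gt_atTop 0] with x hx hx0
    have hne : x - x₀ ≠ 0 := sub_ne_zero.mpr hx.ne'
    have hne0 : x ≠ 0 := hx0.ne'
    field_simp
    ring
  -- first conclusion: F x / x → d
  have hFdiv : Tendsto (fun x => F x / x) atTop (nhds d) := by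
    have h2 : Tendsto (fun x : ℝ => (F x - F 0) / (x - 0) + F 0 / x) atTop (nhds (d + 0)) :=
      hslope0.add (tendsto_const_nhds.div_atTop tendsto_id)
    rw [add_zero] at h2
    refine h2.congr' ?_
    filter_upwards [eventually_gt_atTop 0] with x hx
    have : x ≠ 0 := hx.ne'
    field_simp
    ring
  -- all slopes are ≤ d
  have hslope_le : ∀ x y : ℝ, x < y → (F y - F x) / (y - x) ≤ d := by
    intro x y hxy
    refine ge_of_tendsto (hslope x) ?_
    filter_upwards [eventually_gt_atTop y] with z hz
    exact hconv.secant_mono (mem_univ x) (mem_univ _) (mem_univ _)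
      hxy.ne' (hxy.trans hz).ne' hz.le
  set g : ℝ → ℝ := fun x => F x - d * x with hg
  have hganti : Antitone g := by
    intro x y hxy
    rcases eq_or_lt_of_le hxy with rfl | hxy
    · exact le_rfl
    have h1 := hslope_le x y hxy
    have hpos : 0 < y - x := sub_pos.mpr hxy
    rw [div_le_iff₀ hpos] at h1
    simp only [hg]
    nlinarith
  have hgL : ∀ x : ℝ, L ≤ g x := by
    intro x₀
    have h2 : Tendsto (fun x => F x₀ - x₀ * ((F x - F x₀) / (x - x₀))) atTop
        (nhds (F x₀ - x₀ * d)) :=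
      tendsto_const_nhds.sub (tendsto_const_nhds.mul (hslope x₀))
    have h3 : L ≤ F x₀ - x₀ * d := by
      refine ge_of_tendsto h2 ?_
      filter_upwards [eventually_gt_atTop x₀] with x hx
      have hne : x - x₀ ≠ 0 := sub_ne_zero.mpr hx.ne'
      have := hL x₀ x hx.ne
      have heq : (F x₀ * x - F x * x₀) / (x - x₀)
          = F x₀ - x₀ * ((F x - F x₀) / (x - x₀)) := by
        field_simp; ring
      rw [heq] at this; exact this
    simpa [hg, mul_comm] using h3
  have hgbdd : BddBelow (Set.range g) := ⟨L, by rintro _ ⟨x, rfl⟩; exact hgL x⟩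
  refine ⟨d, ⨅ x, g x, hFdiv, ⟨le_ciInf hgL, ?_⟩, ?_⟩
  · have := ciInf_le hgbdd 0
    simpa [hg] using this
  · exact tendsto_atTop_ciInf hganti hgbdd
end

section
/- Let q(z) = D z^n ∏_{i=1}^l (z − b_i) be a nonzero one-variable complex Laurent polynomial and m ∈ ℝ a real constant. Then the function t ↦ M(q(t^m z)) = |D|·t^{nm}·∏_{i=1}^l max(t^m, |b_i|) of t ∈ ℝ>0 is multiplicatively convex, where M denotes the Mahler measure. -/
open Real Set Filter

lemma key_max (x y c μ : ℝ) (hx : 0 < x) (hy : 0 < y) (hc : 0 ≤ c)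
    (hμ0 : 0 ≤ μ) (hμ1 : μ ≤ 1) :
    max (x ^ μ * y ^ (1 - μ)) c ≤ max x c ^ μ * max y c ^ (1 - μ) := by
  have hμ1' : 0 ≤ 1 - μ := by linarith
  refine max_le ?_ ?_
  · exact mul_le_mul (Real.rpow_le_rpow hx.le (le_max_left _ _) hμ0)
      (Real.rpow_le_rpow hy.le (le_max_left _ _) hμ1')
      (Real.rpow_nonneg hy.le _)
      (Real.rpow_nonneg (le_trans hc (le_max_right _ _)) _)
  · calc c = c ^ (μ + (1 - μ)) := by norm_num
      _ = c ^ μ * c ^ (1 - μ) := Real.rpow_add' hc (by norm_num)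
      _ ≤ max x c ^ μ * max y c ^ (1 - μ) :=
        mul_le_mul (Real.rpow_le_rpow hc (le_max_right _ _) hμ0)
          (Real.rpow_le_rpow hc (le_max_right _ _) hμ1')
          (Real.rpow_nonneg hc _)
          (Real.rpow_nonneg (le_trans hc (le_max_right _ _)) _)

theorem stmt15 (D : ℂ) (hD : D ≠ 0) (n : ℤ) (l : ℕ) (b : Fin l → ℂ) (m : ℝ) :
    MulConvex (fun t : ℝ =>
      ‖D‖ * t ^ ((n : ℝ) * m) * ∏ i, max (t ^ m) ‖b i‖) := by
  intro t₀ t₁ μ ht₀ ht₁ hμ0 hμ1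
  have hμ0' : (0:ℝ) ≤ μ := hμ0.le
  have hμ1' : (0:ℝ) ≤ 1 - μ := by linarith
  have hD' : 0 < ‖D‖ := norm_pos_iff.mpr hD
  simp only
  set A := (n : ℝ) * m with hA
  have habs : ‖D‖ = ‖D‖ ^ μ * ‖D‖ ^ (1 - μ) := by
    rw [← Real.rpow_add hD']; norm_num
  have hpow : (t₀ ^ μ * t₁ ^ (1 - μ)) ^ A = (t₀ ^ A) ^ μ * (t₁ ^ A) ^ (1 - μ) := by
    rw [Real.mul_rpow (Real.rpow_nonneg ht₀.le _) (Real.rpow_nonneg ht₁.le _),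
      ← Real.rpow_mul ht₀.le, ← Real.rpow_mul ht₁.le,
      ← Real.rpow_mul ht₀.le, ← Real.rpow_mul ht₁.le, mul_comm μ A, mul_comm (1-μ) A]
  have hprod : ∏ i, max ((t₀ ^ μ * t₁ ^ (1 - μ)) ^ m) ‖b i‖ ≤
      (∏ i, max (t₀ ^ m) ‖b i‖) ^ μ *
      (∏ i, max (t₁ ^ m) ‖b i‖) ^ (1 - μ) := by
    have hm : (t₀ ^ μ * t₁ ^ (1 - μ)) ^ m = (t₀ ^ m) ^ μ * (t₁ ^ m) ^ (1 - μ) := by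
      rw [Real.mul_rpow (Real.rpow_nonneg ht₀.le _) (Real.rpow_nonneg ht₁.le _),
        ← Real.rpow_mul ht₀.le, ← Real.rpow_mul ht₁.le,
        ← Real.rpow_mul ht₀.le, ← Real.rpow_mul ht₁.le, mul_comm μ m, mul_comm (1-μ) m]
    rw [hm, ← Real.finset_prod_rpow _ _ (fun i _ => le_max_of_le_left (Real.rpow_nonneg ht₀.le _)) μ,
      ← Real.finset_prod_rpow _ _ (fun i _ => le_max_of_le_left (Real.rpow_nonneg ht₁.le _)) (1-μ),
      ← Finset.prod_mul_distrib]
    refine Finset.prod_le_prod (fun i _ => le_max_of_le_left ?_) (fun i _ => ?_)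
    · positivity
    · exact key_max _ _ _ _ (Real.rpow_pos_of_pos ht₀ _) (Real.rpow_pos_of_pos ht₁ _)
        (norm_nonneg _) hμ0' hμ1.le
  calc ‖D‖ * (t₀ ^ μ * t₁ ^ (1 - μ)) ^ A *
        ∏ i, max ((t₀ ^ μ * t₁ ^ (1 - μ)) ^ m) ‖b i‖
      ≤ ‖D‖ * (t₀ ^ μ * t₁ ^ (1 - μ)) ^ A *
        ((∏ i, max (t₀ ^ m) ‖b i‖) ^ μ *
         (∏ i, max (t₁ ^ m) ‖b i‖) ^ (1 - μ)) := by
        refine mul_le_mul_of_nonneg_left hprod ?_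
        positivity
    _ = (‖D‖ * t₀ ^ A * ∏ i, max (t₀ ^ m) ‖b i‖) ^ μ *
        (‖D‖ * t₁ ^ A * ∏ i, max (t₁ ^ m) ‖b i‖) ^ (1 - μ) := by
        rw [hpow, Real.mul_rpow (by positivity) (by positivity),
          Real.mul_rpow (by positivity) (by positivity),
          Real.mul_rpow (by positivity) (by positivity),
          Real.mul_rpow (by positivity) (by positivity)]
        nth_rewrite 1 [habs]
        ring
end
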